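/- Let w : ℕ → ℝ be a weight sequence, let a : ℕ → ℝ satisfy a k ≥ 0 for all k, and let Q ∈ ℝ be such that the series ∑_k a k · exp(−(w k)·s) converges for every complex s with Re s > Q. Then the function F(s) = ∑_k a k · exp(−(w k)·s) is complex differentiable (analytic) at every point of the open half-plane { s ∈ ℂ : Re s > Q }. -/

import Mathlib

/-- A weight sequence: strictly increasing and nonnegative. -/
def IsWeightSeq (w : ℕ → ℝ) : Prop :=
  StrictMono w ∧ ∀ k, 0 ≤ w k

theorem dirichlet_analytic_on_halfplane (w a : ℕ → ℝ)
    (hw : IsWeightSeq w) (ha : ∀ k, 0 ≤ a k)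
    (Q : ℝ)
    (hconv : ∀ s : ℂ, Q < s.re →
      Summable (fun k => (a k : ℂ) * Complex.exp (-(w k : ℂ) * s))) :
    ∀ s : ℂ, Q < s.re →
      DifferentiableAt ℂ
        (fun z : ℂ => ∑' k, (a k : ℂ) * Complex.exp (-(w k : ℂ) * z)) s := by
  intro s hs
  set Q' : ℝ := (Q + s.re) / 2 with hQ'
  have hQ1 : Q < Q' := by simp [hQ']; linarith
  have hQ2 : Q' < s.re := by simp [hQ']; linarith
  set U : Set ℂ := {z : ℂ | Q' < z.re} with hU
  have hUopen : IsOpen U := isOpen_lt continuous_const Complex.continuous_re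
  -- summable bound
  have hsum : Summable (fun k => a k * Real.exp (-(w k) * Q')) := by
    have h := hconv (Q' : ℂ) (by simpa using hQ1)
    have := (Complex.reCLM : ℂ →L[ℝ] ℝ).summable h
    refine this.congr fun k => ?_
    simp only [Complex.reCLM_apply]
    rw [show (-(w k : ℂ) * (Q' : ℂ)) = ((-(w k) * Q' : ℝ) : ℂ) by push_cast; ring,
      ← Complex.ofReal_exp, ← Complex.ofReal_mul, Complex.ofReal_re]
  have key : DifferentiableOn ℂ
      (fun z : ℂ => ∑' k, (a k : ℂ) * Complex.exp (-(w k : ℂ) * z)) U := by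
    refine Complex.differentiableOn_tsum_of_summable_norm hsum (fun k => ?_) hUopen
      (fun k z hz => ?_)
    · exact (Differentiable.differentiableOn (by fun_prop))
    · rw [norm_mul, Complex.norm_exp]
      have : (-(w k : ℂ) * z).re = -(w k) * z.re := by simp
      rw [this]
      simp only [Complex.norm_real, Real.norm_eq_abs, abs_of_nonneg (ha k)]
      have hz' : Q' < z.re := hz
      exact mul_le_mul_of_nonneg_left
        (Real.exp_le_exp.2 (by nlinarith [hw.2 k])) (ha k)
  exact (key.differentiableAt (hUopen.mem_nhds (by simpa [hU] using hQ2)))
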